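/- Let g₁,…,g_{N−m} be polynomials in the variables (x,y) = (x₁,…,x_m, y₁,…,y_{N−m}), where for each j the polynomial g_j has the form g_j(x,y) = y_j^{d_j} − Σ_{k=0}^{d_j−1} g_{jk}(x, y₁,…,y_{j−1}) y_j^k with d_j ≥ 1 and each g_{jk} a polynomial of total degree at most d_j − k. Let V ⊆ ℂ^m × ℂ^{N−m} be the common zero set of g₁,…,g_{N−m}. Then there exists a constant A > 0 such that ‖y‖ ≤ A(1 + ‖x‖) for all (x,y) ∈ V. -/

import Mathlib

open MvPolynomial

/-- The Euclidean norm of a vector in `ℂ^ι`. -/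
noncomputable def eucNorm {ι : Type*} [Fintype ι] (x : ι → ℂ) : ℝ :=
  Real.sqrt (∑ i, ‖x i‖ ^ 2)

/-- The complex absolute value, as a bundled absolute value. -/
noncomputable def Complex.abs : AbsoluteValue ℂ ℝ :=
  IsAbsoluteValue.toAbsoluteValue (norm : ℂ → ℝ)

lemma abs_eval_le {σ : Type*} (p : MvPolynomial σ ℂ) (v : σ → ℂ) (M : ℝ) (hM : 1 ≤ M)
    (hv : ∀ i ∈ p.vars, Complex.abs (v i) ≤ M) :
    Complex.abs (eval v p) ≤ (∑ e ∈ p.support, Complex.abs (p.coeff e)) * M ^ p.totalDegree := by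
  rw [eval_eq, Finset.sum_mul]
  refine le_trans (AbsoluteValue.sum_le _ _ _) (Finset.sum_le_sum fun e he => ?_)
  rw [map_mul]
  refine mul_le_mul_of_nonneg_left ?_ (AbsoluteValue.nonneg _ _)
  rw [map_prod]
  calc ∏ i ∈ e.support, Complex.abs (v i ^ e i)
      ≤ ∏ i ∈ e.support, M ^ e i := by
        refine Finset.prod_le_prod (fun _ _ => AbsoluteValue.nonneg _ _) (fun i hi => ?_)
        rw [map_pow]
        exact pow_le_pow_left₀ (AbsoluteValue.nonneg _ _)
          (hv i (mem_vars i |>.mpr ⟨e, he, hi⟩)) _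
    _ = M ^ (e.sum fun _ n => n) := by
        rw [Finset.prod_pow_eq_pow_sum]; rfl
    _ ≤ M ^ p.totalDegree := pow_le_pow_right₀ hM (le_totalDegree he)

lemma root_bound (d : ℕ) (hd : 1 ≤ d) (z : ℂ) (a : ℕ → ℂ) (C M : ℝ)
    (hC : 1 ≤ C) (hM : 1 ≤ M)
    (ha : ∀ k < d, Complex.abs (a k) ≤ C * M ^ (d - k))
    (hz : z ^ d = ∑ k ∈ Finset.range d, a k * z ^ k) :
    Complex.abs z ≤ d * C * M := by
  have hdCM : M ≤ d * C * M := by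
    have h1 : (1:ℝ) ≤ (d:ℝ) := by exact_mod_cast hd
    nlinarith [mul_le_mul h1 hC zero_le_one (by linarith : (0:ℝ) ≤ (d:ℝ))]
  by_cases hzM : Complex.abs z ≤ M
  · exact hzM.trans hdCM
  push_neg at hzM
  have hz1 : (1:ℝ) ≤ Complex.abs z := hM.trans hzM.le
  have hz0 : (0:ℝ) < Complex.abs z := lt_of_lt_of_le one_pos hz1
  have key : Complex.abs z ^ d ≤ d * C * M * Complex.abs z ^ (d - 1) := by
    calc Complex.abs z ^ d = Complex.abs (z ^ d) := (map_pow _ _ _).symm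
      _ ≤ ∑ k ∈ Finset.range d, Complex.abs (a k * z ^ k) := by
          rw [hz]; exact AbsoluteValue.sum_le _ _ _
      _ ≤ ∑ k ∈ Finset.range d, C * M * Complex.abs z ^ (d - 1) := by
          refine Finset.sum_le_sum fun k hk => ?_
          rw [Finset.mem_range] at hk
          rw [map_mul, map_pow]
          calc Complex.abs (a k) * Complex.abs z ^ k
              ≤ (C * M ^ (d - k)) * Complex.abs z ^ k := by
                exact mul_le_mul_of_nonneg_right (ha k hk) (by positivity)
            _ ≤ C * M * Complex.abs z ^ (d - 1) := by
                have h1 : M ^ (d - k) = M * M ^ (d - 1 - k) := by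
                  rw [← pow_succ']
                  congr 1
                  omega
                have h2 : M ^ (d - 1 - k) ≤ Complex.abs z ^ (d - 1 - k) :=
                  pow_le_pow_left₀ (by linarith) hzM.le _
                have h3 : Complex.abs z ^ (d - 1 - k) * Complex.abs z ^ k
                    = Complex.abs z ^ (d - 1) := by
                  rw [← pow_add]; congr 1; omega
                calc (C * M ^ (d - k)) * Complex.abs z ^ k
                    = C * M * (M ^ (d - 1 - k) * Complex.abs z ^ k) := by rw [h1]; ring
                  _ ≤ C * M * (Complex.abs z ^ (d - 1 - k) * Complex.abs z ^ k) := by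
                      refine mul_le_mul_of_nonneg_left ?_ (by positivity)
                      exact mul_le_mul_of_nonneg_right h2 (by positivity)
                  _ = C * M * Complex.abs z ^ (d - 1) := by rw [h3]
      _ = d * C * M * Complex.abs z ^ (d - 1) := by
          rw [Finset.sum_const, Finset.card_range, nsmul_eq_mul]; ring
  have hpow : Complex.abs z ^ d = Complex.abs z * Complex.abs z ^ (d - 1) := by
    rw [← pow_succ']; congr 1; omega
  rw [hpow] at key
  have hp : (0:ℝ) < Complex.abs z ^ (d - 1) := by positivity
  exact le_of_mul_le_mul_right (by linarith) hp

lemma abs_le_eucNorm {ι : Type*} [Fintype ι] (x : ι → ℂ) (i : ι) :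
    Complex.abs (x i) ≤ eucNorm x := by
  rw [eucNorm, ← Real.sqrt_sq (AbsoluteValue.nonneg _ _)]
  exact Real.sqrt_le_sqrt (Finset.single_le_sum (f := fun j => Complex.abs (x j) ^ 2)
    (fun j _ => sq_nonneg _) (Finset.mem_univ i))

lemma eucNorm_nonneg {ι : Type*} [Fintype ι] (x : ι → ℂ) : 0 ≤ eucNorm x :=
  Real.sqrt_nonneg _

/-- The polynomials `g₁,…,g_s` in the variables `(x,y) = (x₁,…,x_m,y₁,…,y_s)` have the
shape of defining polynomials of a Noether presentation:
`g_j = y_j^{d_j} − Σ_{k<d_j} g_{jk}(x,y₁,…,y_{j−1}) y_j^k` with `d_j ≥ 1` and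
`deg g_{jk} ≤ d_j − k`. -/
def NoetherForm (m s : ℕ) (g : Fin s → MvPolynomial (Fin m ⊕ Fin s) ℂ)
    (d : Fin s → ℕ) : Prop :=
  ∀ j : Fin s, 1 ≤ d j ∧
    ∃ c : ℕ → MvPolynomial (Fin m ⊕ Fin s) ℂ,
      (∀ k < d j, (c k).totalDegree ≤ d j - k) ∧
      (∀ k < d j, ∀ v ∈ (c k).vars, ∀ j' : Fin s, v = Sum.inr j' → j' < j) ∧
      g j = X (Sum.inr j) ^ (d j) - ∑ k ∈ Finset.range (d j), c k * X (Sum.inr j) ^ k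

/-- **Linear growth bound from a Noether presentation.** If `V ⊆ ℂ^m × ℂ^s` is the common
zero set of polynomials `g₁,…,g_s` in Noether form, then there is `A > 0` with
`‖y‖ ≤ A(1 + ‖x‖)` for all `(x,y) ∈ V`. -/
theorem stmt_3 (m s : ℕ) (g : Fin s → MvPolynomial (Fin m ⊕ Fin s) ℂ)
    (d : Fin s → ℕ) (hg : NoetherForm m s g d) :
    ∃ A > 0, ∀ (x : Fin m → ℂ) (y : Fin s → ℂ),
      (∀ j, eval (Sum.elim x y) (g j) = 0) → eucNorm y ≤ A * (1 + eucNorm x) := by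
  classical
  have key : ∀ n : ℕ, ∀ j : Fin s, (j : ℕ) < n → ∃ B : ℝ, 1 ≤ B ∧
      ∀ (x : Fin m → ℂ) (y : Fin s → ℂ), (∀ j', eval (Sum.elim x y) (g j') = 0) →
        Complex.abs (y j) ≤ B * (1 + eucNorm x) := by
    intro n
    induction n with
    | zero => intro j hj; omega
    | succ n IH =>
      intro j hj
      have hjn : (j : ℕ) ≤ n := Nat.lt_succ_iff.mp hj
      set B' : Fin s → ℝ := fun j' =>
        if h : j' < j then (IH j' (lt_of_lt_of_le h hjn)).choose else 1 with hB'def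
      have hB'1 : ∀ j', 1 ≤ B' j' := by
        intro j'
        rw [hB'def]
        by_cases h : j' < j
        · simp only [dif_pos h]
          exact (IH j' (lt_of_lt_of_le h hjn)).choose_spec.1
        · simp [dif_neg h]
      have hB'bound : ∀ j', j' < j → ∀ (x : Fin m → ℂ) (y : Fin s → ℂ),
          (∀ j'', eval (Sum.elim x y) (g j'') = 0) →
          Complex.abs (y j') ≤ B' j' * (1 + eucNorm x) := by
        intro j' h x y hsol
        rw [hB'def]
        simp only [dif_pos h]
        exact (IH j' (lt_of_lt_of_le h hjn)).choose_spec.2 x y hsol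
      set Bp : ℝ := 1 + ∑ j', B' j' with hBpdef
      have hBp1 : 1 ≤ Bp := by
        have : (0:ℝ) ≤ ∑ j', B' j' :=
          Finset.sum_nonneg fun j' _ => le_trans zero_le_one (hB'1 j')
        simp [hBpdef]; linarith
      have hBple : ∀ j', B' j' ≤ Bp := by
        intro j'
        have : B' j' ≤ ∑ j'', B' j'' :=
          Finset.single_le_sum (fun j'' _ => le_trans zero_le_one (hB'1 j''))
            (Finset.mem_univ j')
        simp [hBpdef]; linarith
      obtain ⟨hd1, c, hdeg, hvars, hgj⟩ := hg j
      set C : ℝ := 1 + ∑ k ∈ Finset.range (d j),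
          ∑ e ∈ (c k).support, Complex.abs ((c k).coeff e) with hCdef
      have hsums_nonneg : ∀ k, (0:ℝ) ≤ ∑ e ∈ (c k).support, Complex.abs ((c k).coeff e) :=
        fun k => Finset.sum_nonneg fun e _ => AbsoluteValue.nonneg _ _
      have hC1 : 1 ≤ C := by
        have : (0:ℝ) ≤ ∑ k ∈ Finset.range (d j),
            ∑ e ∈ (c k).support, Complex.abs ((c k).coeff e) :=
          Finset.sum_nonneg fun k _ => hsums_nonneg k
        simp [hCdef]; linarith
      have hCk : ∀ k < d j, (∑ e ∈ (c k).support, Complex.abs ((c k).coeff e)) ≤ C := by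
        intro k hk
        have : (∑ e ∈ (c k).support, Complex.abs ((c k).coeff e)) ≤
            ∑ k' ∈ Finset.range (d j), ∑ e ∈ (c k').support,
              Complex.abs ((c k').coeff e) :=
          Finset.single_le_sum (fun k' _ => hsums_nonneg k') (Finset.mem_range.mpr hk)
        simp [hCdef]; linarith
      have hdj1 : (1:ℝ) ≤ (d j : ℝ) := by exact_mod_cast hd1
      refine ⟨(d j : ℝ) * C * Bp, ?_, ?_⟩
      · nlinarith [mul_le_mul hdj1 hC1 zero_le_one (by linarith : (0:ℝ) ≤ (d j:ℝ))]
      intro x y hsol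
      set L : ℝ := 1 + eucNorm x with hLdef
      have hL1 : 1 ≤ L := by
        have := eucNorm_nonneg x; simp [hLdef]; linarith
      have hM1 : 1 ≤ Bp * L := by nlinarith
      have heq : y j ^ d j = ∑ k ∈ Finset.range (d j),
          eval (Sum.elim x y) (c k) * y j ^ k := by
        have h := hsol j
        rw [hgj] at h
        simp only [map_sub, map_pow, map_sum, map_mul, eval_X, Sum.elim_inr] at h
        rw [sub_eq_zero] at h
        exact h
      have ha : ∀ k < d j,
          Complex.abs (eval (Sum.elim x y) (c k)) ≤ C * (Bp * L) ^ (d j - k) := by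
        intro k hk
        have hv : ∀ i ∈ (c k).vars, Complex.abs (Sum.elim x y i) ≤ Bp * L := by
          intro i hi
          cases i with
          | inl i' =>
            simp only [Sum.elim_inl]
            have h1 : Complex.abs (x i') ≤ eucNorm x := abs_le_eucNorm x i'
            nlinarith [eucNorm_nonneg x]
          | inr j' =>
            simp only [Sum.elim_inr]
            have hlt : j' < j := hvars k hk _ hi j' rfl
            have h1 := hB'bound j' hlt x y hsol
            have h2 := hBple j'
            have h3 := hB'1 j'
            nlinarith
        calc Complex.abs (eval (Sum.elim x y) (c k))
            ≤ (∑ e ∈ (c k).support, Complex.abs ((c k).coeff e)) *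
              (Bp * L) ^ (c k).totalDegree := abs_eval_le (c k) _ _ hM1 hv
          _ ≤ C * (Bp * L) ^ (d j - k) := by
              exact mul_le_mul (hCk k hk) (pow_le_pow_right₀ hM1 (hdeg k hk))
                (by positivity) (by linarith)
      calc Complex.abs (y j)
          ≤ (d j : ℝ) * C * (Bp * L) :=
            root_bound (d j) hd1 (y j) (fun k => eval (Sum.elim x y) (c k)) C (Bp * L)
              hC1 hM1 ha heq
        _ = (d j : ℝ) * C * Bp * (1 + eucNorm x) := by rw [hLdef]; ring
  set Bf : Fin s → ℝ := fun j => (key s j j.isLt).choose with hBfdef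
  have hBf1 : ∀ j, 1 ≤ Bf j := fun j => (key s j j.isLt).choose_spec.1
  have hBfb : ∀ j (x : Fin m → ℂ) (y : Fin s → ℂ),
      (∀ j', eval (Sum.elim x y) (g j') = 0) →
      Complex.abs (y j) ≤ Bf j * (1 + eucNorm x) :=
    fun j => (key s j j.isLt).choose_spec.2
  set Btot : ℝ := 1 + ∑ j, Bf j with hBtotdef
  have hBtot1 : 1 ≤ Btot := by
    have : (0:ℝ) ≤ ∑ j, Bf j :=
      Finset.sum_nonneg fun j _ => le_trans zero_le_one (hBf1 j)
    simp [hBtotdef]; linarith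
  have hBtotle : ∀ j, Bf j ≤ Btot := by
    intro j
    have : Bf j ≤ ∑ j', Bf j' :=
      Finset.single_le_sum (fun j' _ => le_trans zero_le_one (hBf1 j'))
        (Finset.mem_univ j)
    simp [hBtotdef]; linarith
  refine ⟨(1 + Real.sqrt s) * Btot, by positivity, ?_⟩
  intro x y hsol
  set L : ℝ := 1 + eucNorm x with hLdef
  have hL1 : 1 ≤ L := by
    have := eucNorm_nonneg x; simp [hLdef]; linarith
  have hyj : ∀ j, Complex.abs (y j) ≤ Btot * L := by
    intro j
    calc Complex.abs (y j) ≤ Bf j * L := hBfb j x y hsol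
      _ ≤ Btot * L := mul_le_mul_of_nonneg_right (hBtotle j) (by linarith)
  have hBL : 0 ≤ Btot * L := by nlinarith
  calc eucNorm y = Real.sqrt (∑ j, Complex.abs (y j) ^ 2) := rfl
    _ ≤ Real.sqrt (∑ _j : Fin s, (Btot * L) ^ 2) := by
        refine Real.sqrt_le_sqrt (Finset.sum_le_sum fun j _ => ?_)
        exact pow_le_pow_left₀ (AbsoluteValue.nonneg _ _) (hyj j) 2
    _ = Real.sqrt ((s : ℝ) * (Btot * L) ^ 2) := by
        rw [Finset.sum_const, Finset.card_univ, Fintype.card_fin, nsmul_eq_mul]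
    _ = Real.sqrt s * (Btot * L) := by
        rw [Real.sqrt_mul (Nat.cast_nonneg s), Real.sqrt_sq hBL]
    _ ≤ (1 + Real.sqrt s) * Btot * L := by nlinarith [Real.sqrt_nonneg (s:ℝ)]
    _ = (1 + Real.sqrt s) * Btot * (1 + eucNorm x) := by rw [hLdef]
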